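/- There exist 2×2 PSD matrices A, B and a non-negative increasing convex function g on [0,∞) with g(0)=0 such that ‖g(A)−g(B)‖_∞ < ‖g(|A−B|)‖_∞. Concretely, g(x) = x + max(x−1, 0), A = diag(0.9, 0.6), and B = [[0.8, 0.5],[0.5, 0.4]] give a counterexample. -/

import Mathlib

open Matrix
open scoped ComplexOrder

/-- `f` applied to a matrix via the spectral decomposition (junk value `0` if
the matrix is not Hermitian). -/
noncomputable def matFun {n : ℕ} (f : ℝ → ℝ) (A : Matrix (Fin n) (Fin n) ℂ) :
    Matrix (Fin n) (Fin n) ℂ :=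
  if hA : A.IsHermitian then
    (hA.eigenvectorUnitary : Matrix (Fin n) (Fin n) ℂ) *
      Matrix.diagonal (fun i => (f (hA.eigenvalues i) : ℂ)) *
      (star hA.eigenvectorUnitary : Matrix (Fin n) (Fin n) ℂ)
  else 0

/-- The eigenvalues of a Hermitian matrix, sorted in non-increasing order
(junk value `0` if the matrix is not Hermitian). -/
noncomputable def eigsDesc {n : ℕ} (A : Matrix (Fin n) (Fin n) ℂ) : Fin n → ℝ :=
  if hA : A.IsHermitian then (fun k => hA.eigenvalues (Tuple.sort hA.eigenvalues (Fin.rev k)))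
  else 0

/-- The absolute value `|X| = (XᴴX)^{1/2}` of a matrix. -/
noncomputable def matAbs {n : ℕ} (X : Matrix (Fin n) (Fin n) ℂ) : Matrix (Fin n) (Fin n) ℂ :=
  (Matrix.posSemidef_conjTranspose_mul_self X).1.eigenvectorUnitary.1 *
    Matrix.diagonal ((↑) ∘ (Real.sqrt ·) ∘ (Matrix.posSemidef_conjTranspose_mul_self X).1.eigenvalues) *
    (star (Matrix.posSemidef_conjTranspose_mul_self X).1.eigenvectorUnitary : Matrix (Fin n) (Fin n) ℂ)

/-- The singular values of `X`, sorted in non-increasing order. -/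
noncomputable def svalsDesc {n : ℕ} (X : Matrix (Fin n) (Fin n) ℂ) : Fin n → ℝ :=
  eigsDesc (matAbs X)

/-- Sum of the first `k` entries of a vector indexed by `Fin n`. -/
noncomputable def kSum {n : ℕ} (μ : Fin n → ℝ) (k : ℕ) : ℝ :=
  ∑ j ∈ Finset.univ.filter (fun j : Fin n => (j : ℕ) < k), μ j

/-- The operator norm: the largest singular value. -/
noncomputable def opNorm {n : ℕ} (X : Matrix (Fin n) (Fin n) ℂ) : ℝ :=
  ⨆ i, svalsDesc X i

lemma matAbs_psd {n : ℕ} (X : Matrix (Fin n) (Fin n) ℂ) : (matAbs X).PosSemidef := by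
  unfold matAbs
  have hd : (Matrix.diagonal ((↑) ∘ (Real.sqrt ·) ∘
      (Matrix.posSemidef_conjTranspose_mul_self X).1.eigenvalues) : Matrix (Fin n) (Fin n) ℂ).PosSemidef := by
    rw [Matrix.posSemidef_diagonal_iff]
    intro i
    exact Complex.zero_le_real.mpr (Real.sqrt_nonneg _)
  simpa [Matrix.star_eq_conjTranspose] using
    hd.mul_mul_conjTranspose_same ((Matrix.posSemidef_conjTranspose_mul_self X).1.eigenvectorUnitary : Matrix (Fin n) (Fin n) ℂ)

lemma matAbs_mul_self {n : ℕ} (X : Matrix (Fin n) (Fin n) ℂ) : matAbs X * matAbs X = Xᴴ * X := by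
  have hP := Matrix.posSemidef_conjTranspose_mul_self X
  unfold matAbs
  have e : ∀ A D S : Matrix (Fin n) (Fin n) ℂ, S * A = 1 → A * D * S * (A * D * S) = A * (D * D) * S := by
    intro A D S h
    rw [show A * D * S * (A * D * S) = A * D * (S * A) * D * S by simp only [Matrix.mul_assoc], h,
      Matrix.mul_one, Matrix.mul_assoc A D D]
  have hu : (star hP.1.eigenvectorUnitary : Matrix (Fin n) (Fin n) ℂ) * hP.1.eigenvectorUnitary.1 = 1 := by
    simpa using Matrix.mem_unitaryGroup_iff'.mp hP.1.eigenvectorUnitary.2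
  rw [e _ _ _ hu, Matrix.diagonal_mul_diagonal]
  conv_rhs => rw [hP.1.spectral_theorem, Unitary.conjStarAlgAut_apply]
  congr 2
  congr 1
  funext i
  simp only [Function.comp_apply]
  rw [← Complex.ofReal_mul, Real.mul_self_sqrt (hP.eigenvalues_nonneg i)]
  rfl

lemma conj_ofSci (m : ℕ) (s : Bool) (e : ℕ) :
    (starRingEnd ℂ) (OfScientific.ofScientific m s e) = OfScientific.ofScientific m s e := by
  rw [← Complex.ofReal_ofScientific, Complex.conj_ofReal]

/-- PSD criterion for real symmetric 2×2 matrix. -/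
lemma psd2 (a b c : ℝ) (ha : 0 ≤ a) (hc : 0 ≤ c) (h : b ^ 2 ≤ a * c) :
    (!![((a:ℝ):ℂ), ((b:ℝ):ℂ); ((b:ℝ):ℂ), ((c:ℝ):ℂ)]).PosSemidef := by
  rw [Matrix.posSemidef_iff_dotProduct_mulVec]
  constructor
  · ext i j
    fin_cases i <;> fin_cases j <;>
      simp [Matrix.conjTranspose_apply, Complex.conj_ofReal]
  · intro x
    set u := x 0; set v := x 1
    have hexp : star x ⬝ᵥ (!![((a:ℝ):ℂ), ((b:ℝ):ℂ); ((b:ℝ):ℂ), ((c:ℝ):ℂ)] *ᵥ x)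
        = ((a * (u.re ^ 2 + u.im ^ 2) + c * (v.re ^ 2 + v.im ^ 2)
            + 2 * b * (u.re * v.re + u.im * v.im) : ℝ) : ℂ) := by
      have : star x ⬝ᵥ (!![((a:ℝ):ℂ), ((b:ℝ):ℂ); ((b:ℝ):ℂ), ((c:ℝ):ℂ)] *ᵥ x)
          = (starRingEnd ℂ) u * ((a:ℂ) * u + (b:ℂ) * v) +
            (starRingEnd ℂ) v * ((b:ℂ) * u + (c:ℂ) * v) := by
        simp [dotProduct, Matrix.mulVec, Fin.sum_univ_two, u, v, mul_comm]
      rw [this]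
      apply Complex.ext <;>
        (simp [Complex.add_re, Complex.mul_re, Complex.add_im, Complex.mul_im,
          ← Complex.ofReal_pow, Complex.ofReal_re, Complex.ofReal_im]; ring)
    rw [hexp]
    rw [Complex.zero_le_real]
    rcases eq_or_lt_of_le ha with ha0 | ha0
    · have hb : b = 0 := by nlinarith [sq_nonneg b]
      rw [hb, ← ha0]
      nlinarith [sq_nonneg u.re, sq_nonneg u.im, sq_nonneg v.re, sq_nonneg v.im]
    · nlinarith [sq_nonneg (a * u.re + b * v.re), sq_nonneg (a * u.im + b * v.im),
        mul_nonneg (sub_nonneg.2 h) (add_nonneg (sq_nonneg v.re) (sq_nonneg v.im)),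
        ha0.le]

lemma trace_sq (M : Matrix (Fin 2) (Fin 2) ℂ) :
    (M * M).trace = M.trace ^ 2 - 2 * M.det := by
  simp [Matrix.trace_fin_two, Matrix.det_fin_two, Matrix.mul_apply, Fin.sum_univ_two]
  ring

lemma iSup_fin_two (f : Fin 2 → ℝ) : (⨆ i, f i) = max (f 0) (f 1) := by
  apply le_antisymm
  · refine ciSup_le fun i => ?_
    fin_cases i
    · exact le_max_left _ _
    · exact le_max_right _ _
  · exact max_le (le_ciSup (Set.Finite.bddAbove (Set.finite_range f)) 0)
      (le_ciSup (Set.Finite.bddAbove (Set.finite_range f)) 1)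

lemma max_perm (e : Equiv.Perm (Fin 2)) (f : Fin 2 → ℝ) :
    max (f (e 0)) (f (e 1)) = max (f 0) (f 1) := by
  have key : ∀ i : Fin 2, i = 0 ∨ i = 1 := by decide
  rcases key (e 0) with h0 | h0 <;> rcases key (e 1) with h1 | h1
  · exact absurd (e.injective (h0.trans h1.symm)) (by decide)
  · rw [h0, h1]
  · rw [h0, h1, max_comm]
  · exact absurd (e.injective (h0.trans h1.symm)) (by decide)

lemma opNorm_eq_max (X : Matrix (Fin 2) (Fin 2) ℂ) (h : (matAbs X).IsHermitian) :
    opNorm X = max (h.eigenvalues 0) (h.eigenvalues 1) := by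
  unfold opNorm svalsDesc eigsDesc
  rw [dif_pos h, iSup_fin_two]
  have := max_perm ((Fin.revPerm).trans (Tuple.sort h.eigenvalues)) h.eigenvalues
  simpa using this

lemma eig_pair {M : Matrix (Fin 2) (Fin 2) ℂ} (hM : M.IsHermitian) :
    M.trace = ((hM.eigenvalues 0 + hM.eigenvalues 1 : ℝ) : ℂ) ∧
    M.det = ((hM.eigenvalues 0 * hM.eigenvalues 1 : ℝ) : ℂ) := by
  constructor
  · conv_lhs => rw [hM.spectral_theorem, Unitary.conjStarAlgAut_apply]
    rw [Matrix.trace_mul_cycle,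
      Matrix.mem_unitaryGroup_iff'.mp hM.eigenvectorUnitary.2, Matrix.one_mul,
      Matrix.trace_diagonal, Fin.sum_univ_two]
    push_cast
    rfl
  · rw [hM.det_eq_prod_eigenvalues, Fin.prod_univ_two]
    push_cast
    rfl

lemma matFun_linear {M : Matrix (Fin 2) (Fin 2) ℂ} (hM : M.IsHermitian) (f : ℝ → ℝ) (c d : ℝ)
    (h : ∀ i, f (hM.eigenvalues i) = c * hM.eigenvalues i + d) :
    matFun f M = (c : ℂ) • M + (d : ℂ) • 1 := by
  unfold matFun
  rw [dif_pos hM]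
  have hd : (Matrix.diagonal (fun i => (f (hM.eigenvalues i) : ℂ)))
      = (c : ℂ) • Matrix.diagonal (RCLike.ofReal ∘ hM.eigenvalues) + (d : ℂ) • 1 := by
    ext i j
    by_cases hij : i = j
    · subst hij
      simp only [Matrix.diagonal_apply_eq, h i, Matrix.add_apply, Matrix.smul_apply,
        Matrix.one_apply_eq, Function.comp_apply, smul_eq_mul, mul_one]
      push_cast
      rfl
    · simp [Matrix.diagonal_apply_ne _ hij, Matrix.one_apply_ne hij]
  rw [hd, Matrix.mul_add, Matrix.add_mul, Matrix.mul_smul, Matrix.smul_mul,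
    Matrix.mul_smul, Matrix.smul_mul, Matrix.mul_one,
    Matrix.mem_unitaryGroup_iff.mp hM.eigenvectorUnitary.2]
  conv_rhs => rw [hM.spectral_theorem, Unitary.conjStarAlgAut_apply]

lemma opNorm_formula (X : Matrix (Fin 2) (Fin 2) ℂ) (t d : ℝ)
    (ht : (Xᴴ * X).trace = (t : ℂ)) (hd : (Xᴴ * X).det = (d : ℂ)) :
    opNorm X = (Real.sqrt (t + 2 * Real.sqrt d) + Real.sqrt (t - 2 * Real.sqrt d)) / 2 := by
  have hPSD : (matAbs X).PosSemidef := matAbs_psd X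
  have hYY : matAbs X * matAbs X = Xᴴ * X :=
    matAbs_mul_self X
  have hH : (matAbs X).IsHermitian := hPSD.1
  set e0 := hH.eigenvalues 0 with he0def
  set e1 := hH.eigenvalues 1 with he1def
  have he0 : 0 ≤ e0 := hPSD.eigenvalues_nonneg 0
  have he1 : 0 ≤ e1 := hPSD.eigenvalues_nonneg 1
  obtain ⟨htr, hdet⟩ := eig_pair hH
  -- trace identity : t = e0^2 + e1^2
  have h2 : ((matAbs X) * (matAbs X)).trace = (matAbs X).trace ^ 2 - 2 * (matAbs X).det :=
    trace_sq _
  rw [hYY, ht, htr, hdet] at h2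
  have ht' : t = e0 ^ 2 + e1 ^ 2 := by
    have := h2
    rw [show (((e0 + e1 : ℝ)) : ℂ) ^ 2 - 2 * ((e0 * e1 : ℝ) : ℂ)
        = (((e0 + e1) ^ 2 - 2 * (e0 * e1) : ℝ) : ℂ) by push_cast; ring] at this
    have := Complex.ofReal_inj.mp this
    nlinarith [this]
  -- det identity : d = (e0*e1)^2
  have hdet2 : ((matAbs X) * (matAbs X)).det = (matAbs X).det * (matAbs X).det := Matrix.det_mul _ _
  rw [hYY, hd, hdet] at hdet2
  have hd' : d = (e0 * e1) ^ 2 := by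
    rw [show (((e0 * e1 : ℝ)) : ℂ) * ((e0 * e1 : ℝ) : ℂ) = (((e0 * e1) ^ 2 : ℝ) : ℂ) by
      push_cast; ring] at hdet2
    exact Complex.ofReal_inj.mp hdet2
  have hP : Real.sqrt d = e0 * e1 := by
    rw [hd', Real.sqrt_sq (mul_nonneg he0 he1)]
  have hS : Real.sqrt (t + 2 * Real.sqrt d) = e0 + e1 := by
    rw [hP, show t + 2 * (e0 * e1) = (e0 + e1) ^ 2 by nlinarith,
      Real.sqrt_sq (add_nonneg he0 he1)]
  have hD : Real.sqrt (t - 2 * Real.sqrt d) = |e0 - e1| := by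
    rw [hP, show t - 2 * (e0 * e1) = (e0 - e1) ^ 2 by nlinarith, Real.sqrt_sq_eq_abs]
  rw [opNorm_eq_max X hH, hS, hD, ← he0def, ← he1def]
  rcases le_total e0 e1 with hle | hle
  · rw [max_eq_right hle, abs_of_nonpos (by linarith)]; ring
  · rw [max_eq_left hle, abs_of_nonneg (by linarith)]; ring

lemma quad_root_mem (x y r1 r2 : ℝ) (hs : x + y = r1 + r2) (hp : x * y = r1 * r2) :
    x = r1 ∨ x = r2 := by
  have h : (x - r1) * (x - r2) = 0 := by linear_combination x * hs - hp
  rcases mul_eq_zero.mp h with h | h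
  · left; linarith
  · right; linarith

noncomputable def gfun : ℝ → ℝ := fun x => x + max (x - 1) 0

lemma gfun_of_le_one {x : ℝ} (hx : x ≤ 1) : gfun x = x := by
  unfold gfun
  rw [max_eq_right (by linarith)]
  ring

lemma gfun_of_ge_one {x : ℝ} (hx : 1 ≤ x) : gfun x = 2 * x - 1 := by
  unfold gfun
  rw [max_eq_left (by linarith)]
  ring

lemma hA_psd : (!![(0.9:ℂ), 0; 0, 0.6]).PosSemidef := by
  have h := psd2 0.9 0 0.6 (by norm_num) (by norm_num) (by norm_num)
  have e : !![(0.9:ℂ), 0; 0, 0.6]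
      = !![((0.9:ℝ):ℂ), ((0:ℝ):ℂ); ((0:ℝ):ℂ), ((0.6:ℝ):ℂ)] := by
    ext i j; fin_cases i <;> fin_cases j <;> norm_num
  rw [e]; exact h

lemma hB_psd : (!![(0.8:ℂ), 0.5; 0.5, 0.4]).PosSemidef := by
  have h := psd2 0.8 0.5 0.4 (by norm_num) (by norm_num) (by norm_num)
  have e : !![(0.8:ℂ), 0.5; 0.5, 0.4]
      = !![((0.8:ℝ):ℂ), ((0.5:ℝ):ℂ); ((0.5:ℝ):ℂ), ((0.4:ℝ):ℂ)] := by
    ext i j; fin_cases i <;> fin_cases j <;> norm_num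
  rw [e]; exact h

lemma matFun_gfun_A : matFun gfun !![(0.9:ℂ), 0; 0, 0.6] = !![(0.9:ℂ), 0; 0, 0.6] := by
  have hA : (!![(0.9:ℂ), 0; 0, 0.6]).IsHermitian := hA_psd.1
  obtain ⟨htr, hdet⟩ := eig_pair hA
  have htr' : hA.eigenvalues 0 + hA.eigenvalues 1 = 1.5 := by
    have h1 : (!![(0.9:ℂ), 0; 0, 0.6]).trace = ((1.5 : ℝ) : ℂ) := by
      norm_num [Matrix.trace_fin_two]
    rw [h1] at htr
    exact_mod_cast htr.symm
  have hdet' : hA.eigenvalues 0 * hA.eigenvalues 1 = 0.54 := by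
    have h1 : (!![(0.9:ℂ), 0; 0, 0.6]).det = ((0.54 : ℝ) : ℂ) := by
      norm_num [Matrix.det_fin_two_of]
    rw [h1] at hdet
    exact_mod_cast hdet.symm
  have hmem : ∀ i, hA.eigenvalues i = 0.9 ∨ hA.eigenvalues i = 0.6 := by
    have h0 := quad_root_mem (hA.eigenvalues 0) (hA.eigenvalues 1) 0.9 0.6
      (by linarith) (by rw [hdet']; norm_num)
    have h1 := quad_root_mem (hA.eigenvalues 1) (hA.eigenvalues 0) 0.9 0.6
      (by linarith) (by rw [mul_comm, hdet']; norm_num)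
    intro i
    fin_cases i
    · simpa using h0
    · simpa using h1
  have h := matFun_linear hA gfun 1 0 (by
    intro i
    rcases hmem i with h | h <;> rw [h, gfun_of_le_one (by norm_num)] <;> ring)
  rw [h]
  push_cast
  simp

lemma matFun_gfun_B :
    matFun gfun !![(0.8:ℂ), 0.5; 0.5, 0.4]
      = ((3/2 - 2/(5*Real.sqrt 1.16) : ℝ) : ℂ) • !![(0.8:ℂ), 0.5; 0.5, 0.4]
        + ((6/(25*Real.sqrt 1.16) + Real.sqrt 1.16/4 - 1/2 : ℝ) : ℂ) • 1 := by
  set q : ℝ := Real.sqrt 1.16 with hqdef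
  have hq2 : q ^ 2 = 1.16 := Real.sq_sqrt (by norm_num)
  have hq0 : 0 < q := Real.sqrt_pos.mpr (by norm_num)
  have hq8 : 0.8 ≤ q := by nlinarith
  have hB : (!![(0.8:ℂ), 0.5; 0.5, 0.4]).IsHermitian := hB_psd.1
  obtain ⟨htr, hdet⟩ := eig_pair hB
  have htr' : hB.eigenvalues 0 + hB.eigenvalues 1 = 1.2 := by
    have h1 : (!![(0.8:ℂ), 0.5; 0.5, 0.4]).trace = ((1.2 : ℝ) : ℂ) := by
      norm_num [Matrix.trace_fin_two]
    rw [h1] at htr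
    exact_mod_cast htr.symm
  have hdet' : hB.eigenvalues 0 * hB.eigenvalues 1 = 0.07 := by
    have h1 : (!![(0.8:ℂ), 0.5; 0.5, 0.4]).det = ((0.07 : ℝ) : ℂ) := by
      norm_num [Matrix.det_fin_two_of]
    rw [h1] at hdet
    exact_mod_cast hdet.symm
  have hmem : ∀ i, hB.eigenvalues i = 0.6 + q/2 ∨ hB.eigenvalues i = 0.6 - q/2 := by
    have h0 := quad_root_mem (hB.eigenvalues 0) (hB.eigenvalues 1) (0.6 + q/2) (0.6 - q/2)
      (by rw [htr']; ring) (by rw [hdet']; linear_combination hq2/4)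
    have h1 := quad_root_mem (hB.eigenvalues 1) (hB.eigenvalues 0) (0.6 + q/2) (0.6 - q/2)
      (by rw [add_comm, htr']; ring) (by rw [mul_comm, hdet']; linear_combination hq2/4)
    intro i
    fin_cases i
    · simpa using h0
    · simpa using h1
  exact matFun_linear hB gfun (3/2 - 2/(5*q)) (6/(25*q) + q/4 - 1/2) (by
    intro i
    rcases hmem i with h | h <;> rw [h]
    · rw [gfun_of_ge_one (by linarith)]
      field_simp
      ring
    · rw [gfun_of_le_one (by linarith)]
      field_simp
      ring)

lemma rhs_opNorm :
    opNorm (matFun gfun (matAbs (!![(0.9:ℂ), 0; 0, 0.6] - !![(0.8:ℂ), 0.5; 0.5, 0.4])))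
      = (Real.sqrt 1.01 + 0.3) / 2 := by
  set M : Matrix (Fin 2) (Fin 2) ℂ := !![(0.9:ℂ), 0; 0, 0.6] - !![(0.8:ℂ), 0.5; 0.5, 0.4]
    with hMdef
  have hM' : M = !![((0.1:ℝ):ℂ), ((-0.5:ℝ):ℂ); ((-0.5:ℝ):ℂ), ((0.2:ℝ):ℂ)] := by
    ext i j
    fin_cases i <;> fin_cases j <;> (push_cast [hMdef]; norm_num)
  have hC : Mᴴ * M = !![(0.26:ℂ), -0.15; -0.15, 0.29] := by
    rw [hM']
    ext i j
    fin_cases i <;> fin_cases j <;>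
      (simp [Matrix.mul_apply, Fin.sum_univ_two, Matrix.conjTranspose_apply,
        Complex.conj_ofReal]; push_cast; norm_num [map_ofNat])
  set Z : Matrix (Fin 2) (Fin 2) ℂ := matAbs M with hZdef
  have hZpsd : Z.PosSemidef := matAbs_psd M
  have hZZ : Z * Z = Mᴴ * M := matAbs_mul_self M
  have hZH : Z.IsHermitian := hZpsd.1
  have hZHeq : Zᴴ = Z := hZH
  obtain ⟨htr, hdet⟩ := eig_pair hZH
  have htrC : (Mᴴ * M).trace = ((0.55 : ℝ) : ℂ) := by
    rw [hC]; norm_num [Matrix.trace_fin_two]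
  have hdetC : (Mᴴ * M).det = ((0.0529 : ℝ) : ℂ) := by
    rw [hC]; norm_num [Matrix.det_fin_two_of]
  -- sum of squares of eigenvalues of Z is 0.55
  have h2 : (Z * Z).trace = Z.trace ^ 2 - 2 * Z.det := trace_sq _
  rw [hZZ, htrC, htr, hdet] at h2
  have hsq : hZH.eigenvalues 0 ^ 2 + hZH.eigenvalues 1 ^ 2 = 0.55 := by
    rw [show (((hZH.eigenvalues 0 + hZH.eigenvalues 1 : ℝ)) : ℂ) ^ 2
        - 2 * ((hZH.eigenvalues 0 * hZH.eigenvalues 1 : ℝ) : ℂ)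
        = (((hZH.eigenvalues 0 + hZH.eigenvalues 1) ^ 2
            - 2 * (hZH.eigenvalues 0 * hZH.eigenvalues 1) : ℝ) : ℂ) by push_cast; ring] at h2
    have h3 := Complex.ofReal_inj.mp h2
    nlinarith [h3]
  have hfix : matFun gfun Z = Z := by
    have h := matFun_linear hZH gfun 1 0 (by
      intro i
      have h0 : 0 ≤ hZH.eigenvalues i := hZpsd.eigenvalues_nonneg i
      have h1 : hZH.eigenvalues i ≤ 1 := by
        have e0 := hZpsd.eigenvalues_nonneg 0
        have e1 := hZpsd.eigenvalues_nonneg 1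
        have l0 : hZH.eigenvalues 0 ≤ 1 := by nlinarith
        have l1 : hZH.eigenvalues 1 ≤ 1 := by nlinarith
        fin_cases i
        · simpa using l0
        · simpa using l1
      rw [gfun_of_le_one h1]; ring)
    rw [h]; push_cast; simp
  rw [hfix]
  rw [opNorm_formula Z 0.55 0.0529 (by rw [hZHeq, hZZ]; exact htrC)
    (by rw [hZHeq, hZZ]; exact hdetC)]
  rw [show (0.0529 : ℝ) = 0.23 ^ 2 by norm_num, Real.sqrt_sq (by norm_num)]
  rw [show (0.55 : ℝ) + 2 * 0.23 = 1.01 by norm_num,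
    show (0.55 : ℝ) - 2 * 0.23 = 0.3 ^ 2 by norm_num, Real.sqrt_sq (by norm_num)]

lemma interval_m (c dd : ℝ) (hc_l : 1.128608 < c) (hc_u : c < 1.128610)
    (hdd_l : -0.007908 < dd) (hdd_u : dd < -0.007906) :
    (0.317652 < (0.5*c)^2 - (0.9 - 0.8*c - dd)*(0.6 - 0.4*c - dd)
      ∧ (0.5*c)^2 - (0.9 - 0.8*c - dd)*(0.6 - 0.4*c - dd) < 0.317656)
    ∧ (0.661381 < (0.9 - 0.8*c - dd)^2 + 2*(0.5*c)^2 + (0.6 - 0.4*c - dd)^2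
      ∧ (0.9 - 0.8*c - dd)^2 + 2*(0.5*c)^2 + (0.6 - 0.4*c - dd)^2 < 0.661389) := by
  have hbox1 := mul_pos (sub_pos.2 hc_l) (sub_pos.2 hc_u)
  have hbox2 := mul_pos (sub_pos.2 hdd_l) (sub_pos.2 hdd_u)
  have hbox3 := mul_pos (sub_pos.2 hc_l) (sub_pos.2 hdd_u)
  have hbox4 := mul_pos (sub_pos.2 hdd_l) (sub_pos.2 hc_u)
  have hs1 := sq_nonneg (c - 1.128608)
  have hs2 := sq_nonneg (c - 1.128610)
  have hs3 := sq_nonneg (dd + 0.007908)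
  have hs4 := sq_nonneg (dd + 0.007906)
  refine ⟨⟨by nlinarith, by nlinarith⟩, ⟨by nlinarith, by nlinarith⟩⟩

set_option maxHeartbeats 1000000 in
lemma lhs_opNorm_lt :
    opNorm (matFun gfun !![(0.9:ℂ), 0; 0, 0.6] - matFun gfun !![(0.8:ℂ), 0.5; 0.5, 0.4])
      < (Real.sqrt 1.01 + 0.3) / 2 := by
  obtain ⟨q, hqdef⟩ : ∃ q : ℝ, q = Real.sqrt 1.16 := ⟨_, rfl⟩
  have hq2 : q ^ 2 = 1.16 := by rw [hqdef]; exact Real.sq_sqrt (by norm_num)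
  have hq0 : 0 < q := by rw [hqdef]; exact Real.sqrt_pos.mpr (by norm_num)
  have hql : (1.077032 : ℝ) < q := by
    rw [hqdef, ← Real.sqrt_sq (show (0:ℝ) ≤ 1.077032 by norm_num)]
    exact Real.sqrt_lt_sqrt (by positivity) (by norm_num)
  have hqu : q < 1.077033 := by
    rw [hqdef, Real.sqrt_lt' (by norm_num)]
    norm_num
  obtain ⟨c, hcdef⟩ : ∃ c : ℝ, c = 3/2 - 2/(5*q) := ⟨_, rfl⟩
  obtain ⟨dd, hdddef⟩ : ∃ dd : ℝ, dd = 6/(25*q) + q/4 - 1/2 := ⟨_, rfl⟩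
  have hi_l : (0.928476 : ℝ) < 1/q := by
    rw [lt_div_iff₀ hq0]; nlinarith
  have hi_u : 1/q < 0.928478 := by
    rw [div_lt_iff₀ hq0]; nlinarith
  have hc_eq : c = 1.5 - 0.4*(1/q) := by rw [hcdef]; ring
  have hdd_eq : dd = 0.24*(1/q) + q/4 - 0.5 := by rw [hdddef]; ring
  have hc_l : (1.128608 : ℝ) < c := by rw [hc_eq]; linarith
  have hc_u : c < 1.128610 := by rw [hc_eq]; linarith
  have hdd_l : (-0.007908 : ℝ) < dd := by rw [hdd_eq]; linarith
  have hdd_u : dd < -0.007906 := by rw [hdd_eq]; linarith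
  obtain ⟨D, hDdef⟩ : ∃ D : Matrix (Fin 2) (Fin 2) ℂ,
      D = !![((0.9 - 0.8*c - dd : ℝ):ℂ), ((-(0.5*c) : ℝ):ℂ);
             ((-(0.5*c) : ℝ):ℂ), ((0.6 - 0.4*c - dd : ℝ):ℂ)] := ⟨_, rfl⟩
  have hD : matFun gfun !![(0.9:ℂ), 0; 0, 0.6] - matFun gfun !![(0.8:ℂ), 0.5; 0.5, 0.4] = D := by
    rw [matFun_gfun_A, matFun_gfun_B, ← hqdef, ← hcdef, ← hdddef, hDdef]
    ext i j
    fin_cases i <;> fin_cases j <;>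
      (simp only [Matrix.sub_apply, Matrix.add_apply, Matrix.smul_apply, Matrix.one_apply,
        Matrix.cons_val', Matrix.cons_val_zero, Matrix.cons_val_one, Matrix.head_cons,
        Matrix.head_fin_const, Matrix.empty_val', Matrix.cons_val_fin_one, smul_eq_mul,
        Fin.isValue, if_true, if_false]
       push_cast
       norm_num
       ring_nf)
  have hDH : Dᴴ = D := by
    rw [hDdef]
    ext i j
    fin_cases i <;> fin_cases j <;> simp [Matrix.conjTranspose_apply, Complex.conj_ofReal, conj_ofSci]
  obtain ⟨m, hmdef⟩ : ∃ m : ℝ,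
      m = (0.5*c)^2 - (0.9 - 0.8*c - dd)*(0.6 - 0.4*c - dd) := ⟨_, rfl⟩
  obtain ⟨t, htdef⟩ : ∃ t : ℝ,
      t = (0.9 - 0.8*c - dd)^2 + 2*(0.5*c)^2 + (0.6 - 0.4*c - dd)^2 := ⟨_, rfl⟩
  obtain ⟨⟨hm_l', hm_u'⟩, ht_l', ht_u'⟩ := interval_m c dd hc_l hc_u hdd_l hdd_u
  have hm_l : (0.317652 : ℝ) < m := by rw [hmdef]; exact hm_l'
  have hm_u : m < 0.317656 := by rw [hmdef]; exact hm_u'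
  have ht_l : (0.661381 : ℝ) < t := by rw [htdef]; exact ht_l'
  have ht_u : t < 0.661389 := by rw [htdef]; exact ht_u'
  have htD : (Dᴴ * D).trace = ((t : ℝ) : ℂ) := by
    rw [hDH, hDdef, htdef, Matrix.trace_fin_two]
    simp [Matrix.mul_apply, Fin.sum_univ_two]
    push_cast
    ring
  have hdD : (Dᴴ * D).det = ((m^2 : ℝ) : ℂ) := by
    rw [hDH, Matrix.det_mul, hDdef, hmdef, Matrix.det_fin_two_of]
    push_cast
    ring
  rw [hD, opNorm_formula D t (m^2) htD hdD, Real.sqrt_sq (by linarith)]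
  have h1 : Real.sqrt (t + 2*m) < 1.13873 := by
    rw [Real.sqrt_lt' (by norm_num)]
    nlinarith
  have h2 : Real.sqrt (t - 2*m) < 0.16151 := by
    rw [Real.sqrt_lt' (by norm_num)]
    nlinarith
  have h3 : (1.00498 : ℝ) < Real.sqrt 1.01 := by
    rw [Real.lt_sqrt (by norm_num)]
    norm_num
  linarith

/-- There are 2×2 PSD matrices `A, B` and a non-negative increasing convex function
`g` on `[0,∞)` with `g 0 = 0` such that `‖g(A)−g(B)‖_∞ < ‖g(|A−B|)‖_∞`; the
counterexample is `g(x) = x + (x−1)₊`, `A = diag(0.9, 0.6)`,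
`B = [[0.8, 0.5],[0.5, 0.4]]`. -/
theorem counterexample_convex_norm :
    ∃ (A B : Matrix (Fin 2) (Fin 2) ℂ) (g : ℝ → ℝ),
      A.PosSemidef ∧ B.PosSemidef ∧
      A = !![(0.9 : ℂ), 0; 0, 0.6] ∧ B = !![(0.8 : ℂ), 0.5; 0.5, 0.4] ∧
      g = (fun x => x + max (x - 1) 0) ∧
      (∀ x ∈ Set.Ici (0 : ℝ), 0 ≤ g x) ∧ MonotoneOn g (Set.Ici (0 : ℝ)) ∧
      ConvexOn ℝ (Set.Ici (0 : ℝ)) g ∧ g 0 = 0 ∧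
      opNorm (matFun g A - matFun g B) < opNorm (matFun g (matAbs (A - B))) := by

  refine ⟨!![(0.9 : ℂ), 0; 0, 0.6], !![(0.8 : ℂ), 0.5; 0.5, 0.4], gfun,
    hA_psd, hB_psd, rfl, rfl, rfl, ?_, ?_, ?_, ?_, ?_⟩
  · intro x hx
    have h := le_max_right (x - 1) (0 : ℝ)
    have hx' := Set.mem_Ici.mp hx
    unfold gfun
    linarith
  · have hm1 : Monotone (fun x : ℝ => x - 1) := fun a b hab => by dsimp; linarith
    have hmono : Monotone gfun := monotone_id.add (hm1.max monotone_const)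
    exact hmono.monotoneOn _
  · have h1 : ConvexOn ℝ (Set.Ici (0:ℝ)) (fun x : ℝ => x - 1) :=
      (convexOn_id (convex_Ici 0)).sub (concaveOn_const 1 (convex_Ici 0))
    have h2 : ConvexOn ℝ (Set.Ici (0:ℝ)) ((fun x : ℝ => x - 1) ⊔ (fun _ : ℝ => (0:ℝ))) :=
      h1.sup (convexOn_const 0 (convex_Ici 0))
    have h3 := (convexOn_id (convex_Ici (0:ℝ))).add h2
    exact h3
  · unfold gfun; norm_num
  · rw [rhs_opNorm]
    exact lhs_opNorm_lt
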